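/- Let (Ω, 𝓕, μ) be a probability space, T : Ω → Ω measurable with T_*μ ≪ μ, and let ρ : Ω → ℝ be a measurable function, positive μ-a.e., with ∫ ρ dμ = 1 and log ρ ∈ L¹(μ), such that ∫ f dμ = ∫ (f ∘ T)·ρ dμ for every bounded measurable f : Ω → ℝ. Then H(T_*μ|μ) = −∫ log ρ dμ holds if and only if 𝔼_μ[ρ | σ(T)] = ρ μ-almost everywhere, where σ(T) = T⁻¹(𝓕). -/

import Mathlib

open MeasureTheory Filter
open scoped Classical ENNReal

/-- Relative entropy (Kullback–Leibler divergence) `H(θ|μ)`, valued in the extended reals: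
`H(θ|μ) = ∫ (dθ/dμ)·log(dθ/dμ) dμ` if `θ ≪ μ` and this integral is defined, `+∞` otherwise. -/
noncomputable def relEntropy {Ω : Type*} [MeasurableSpace Ω] (θ μ : Measure Ω) : EReal :=
  if θ ≪ μ ∧ Integrable (fun x => (θ.rnDeriv μ x).toReal * Real.log (θ.rnDeriv μ x).toReal) μ
  then ((∫ x, (θ.rnDeriv μ x).toReal * Real.log (θ.rnDeriv μ x).toReal ∂μ : ℝ) : EReal)
  else ⊤

theorem stmt_10 {Ω : Type*} [m : MeasurableSpace Ω] (μ : Measure Ω) [IsProbabilityMeasure μ]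
    (T : Ω → Ω) (hT : Measurable T) (hac : μ.map T ≪ μ)
    (ρ : Ω → ℝ) (hρm : Measurable ρ) (hρ0 : ∀ᵐ x ∂μ, 0 < ρ x) (hρ1 : ∫ x, ρ x ∂μ = 1)
    (hlogρ : Integrable (fun x => Real.log (ρ x)) μ)
    (hchg : ∀ f : Ω → ℝ, Measurable f → (∃ C, ∀ x, |f x| ≤ C) →
      ∫ x, f x ∂μ = ∫ x, f (T x) * ρ x ∂μ) :
    relEntropy (μ.map T) μ = ((-∫ x, Real.log (ρ x) ∂μ : ℝ) : EReal) ↔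
      (μ[ρ | MeasurableSpace.comap T m]) =ᵐ[μ] ρ := by
  have hTae : AEMeasurable T μ := hT.aemeasurable
  have hνprob : IsProbabilityMeasure (μ.map T) := Measure.isProbabilityMeasure_map hTae
  set ν : Measure Ω := μ.map T with hνdef
  set g : Ω → ℝ≥0∞ := ν.rnDeriv μ with hgdef
  have hgm : Measurable g := Measure.measurable_rnDeriv ν μ
  have hρint : Integrable ρ μ := by
    by_contra h; rw [integral_undef h] at hρ1; exact one_ne_zero hρ1.symm
  -- set integral of ρ over preimages
  have hsetρ : ∀ A : Set Ω, MeasurableSet A → ∫ x in T ⁻¹' A, ρ x ∂μ = (μ A).toReal := by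
    intro A hA
    have hb : ∃ C, ∀ x, |A.indicator (fun _ => (1:ℝ)) x| ≤ C :=
      ⟨1, fun x => by by_cases hx : x ∈ A <;> simp [hx]⟩
    have h1 := hchg _ (measurable_const.indicator hA) hb
    rw [integral_indicator hA, setIntegral_const, smul_eq_mul, mul_one] at h1
    have h2 : ∀ x, A.indicator (fun _ => (1:ℝ)) (T x) * ρ x = (T ⁻¹' A).indicator ρ x := by
      intro x; by_cases hx : T x ∈ A <;>
        simp [Set.indicator, hx, Set.mem_preimage]
    rw [← integral_indicator (hT hA)]
    rw [← measureReal_def, h1]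
    exact integral_congr_ae (Eventually.of_forall fun x => (h2 x).symm)
  -- μ ≪ ν
  have hμν : μ ≪ ν := by
    refine Measure.AbsolutelyContinuous.mk (fun A hA hA0 => ?_)
    have hTA : μ (T ⁻¹' A) = 0 := by rwa [hνdef, Measure.map_apply hT hA] at hA0
    have := hsetρ A hA
    rw [Measure.restrict_eq_zero.mpr hTA, integral_zero_measure] at this
    exact (ENNReal.toReal_eq_zero_iff _).mp this.symm |>.resolve_right (measure_ne_top μ A)
  -- a.e. facts about g
  have hgν : ∀ᵐ y ∂ν, 0 < g y ∧ g y < ⊤ :=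
    (Measure.rnDeriv_pos hac).and (hac.ae_le (Measure.rnDeriv_lt_top ν μ))
  have hgμ : ∀ᵐ x ∂μ, 0 < g x ∧ g x < ⊤ := hgν.filter_mono hμν.ae_le
  have hgTμ : ∀ᵐ x ∂μ, 0 < g (T x) ∧ g (T x) < ⊤ := by
    have hms : MeasurableSet {y | 0 < g y ∧ g y < ⊤} := by
      simp only [Set.setOf_and]
      exact (measurableSet_lt measurable_const hgm).inter (measurableSet_lt hgm measurable_const)
    have := (ae_map_iff hTae hms).mp (by rwa [← hνdef])
    exact this
  -- the pushforward identity : (ρ μ).map T = μ, in lintegral form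
  have hEpull : ∀ v : Ω → ℝ≥0∞, Measurable v →
      ∫⁻ x, v (T x) ∂μ = ∫⁻ x, v x * g x ∂μ := by
    intro v hv
    rw [show (∫⁻ x, v (T x) ∂μ) = ∫⁻ y, v y ∂ν from (lintegral_map hv hT).symm]
    conv_lhs => rw [← Measure.withDensity_rnDeriv_eq ν μ hac]
    rw [lintegral_withDensity_eq_lintegral_mul μ hgm hv]
    exact lintegral_congr fun x => mul_comm _ _
  have hρ0' : ∀ᵐ x ∂μ, 0 ≤ ρ x := hρ0.mono fun x h => h.le
  set ρe : Ω → ℝ≥0∞ := fun x => ENNReal.ofReal (ρ x) with hρedef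
  have hρem : Measurable ρe := hρm.ennreal_ofReal
  have hmap : (μ.withDensity ρe).map T = μ := by
    refine Measure.ext fun A hA => ?_
    rw [Measure.map_apply hT hA, withDensity_apply _ (hT hA),
      ← ofReal_integral_eq_lintegral_ofReal hρint.integrableOn (ae_restrict_of_ae hρ0'),
      hsetρ A hA, ENNReal.ofReal_toReal (measure_ne_top μ A)]
  -- key lintegral identities
  have hE1 : ∫⁻ x, ρe x * g (T x) ∂μ = 1 := by
    calc ∫⁻ x, ρe x * g (T x) ∂μ
        = ∫⁻ x, g (T x) ∂(μ.withDensity ρe) :=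
          (lintegral_withDensity_eq_lintegral_mul μ hρem (hgm.comp hT)).symm
      _ = ∫⁻ y, g y ∂((μ.withDensity ρe).map T) := (lintegral_map hgm hT).symm
      _ = 1 := by rw [hmap, Measure.lintegral_rnDeriv hac, measure_univ]
  have hE2 : ∫⁻ x, (g (T x))⁻¹ ∂μ = 1 := by
    rw [hEpull (fun y => (g y)⁻¹) hgm.inv]
    have : (fun x => (g x)⁻¹ * g x) =ᵐ[μ] fun _ => (1 : ℝ≥0∞) := by
      filter_upwards [hgμ] with x ⟨h0, ht⟩
      exact ENNReal.inv_mul_cancel h0.ne' ht.ne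
    rw [lintegral_congr_ae this, lintegral_one, measure_univ]
  have hE3 : ∀ A : Set Ω, MeasurableSet A →
      ∫⁻ x in T ⁻¹' A, (g (T x))⁻¹ ∂μ = μ A := by
    intro A hA
    rw [← lintegral_indicator (hT hA)]
    have hi : ∀ x, (T ⁻¹' A).indicator (fun x => (g (T x))⁻¹) x
        = (A.indicator (fun y => (g y)⁻¹)) (T x) := by
      intro x; by_cases hx : T x ∈ A <;> simp [Set.indicator, hx, Set.mem_preimage]
    rw [lintegral_congr hi, hEpull (A.indicator fun y => (g y)⁻¹) (hgm.inv.indicator hA)]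
    have : (fun x => A.indicator (fun y => (g y)⁻¹) x * g x) =ᵐ[μ]
        A.indicator (fun _ => (1 : ℝ≥0∞)) := by
      filter_upwards [hgμ] with x ⟨h0, ht⟩
      by_cases hx : x ∈ A <;> simp [Set.indicator, hx, ENNReal.inv_mul_cancel h0.ne' ht.ne]
    rw [lintegral_congr_ae this, lintegral_indicator hA, setLIntegral_one]
  -- the functions φ and h
  set φ : Ω → ℝ := fun x => ρ x * (g (T x)).toReal with hφdef
  set h : Ω → ℝ := fun x => ((g (T x))⁻¹).toReal with hhdef
  have hφm : Measurable φ := hρm.mul ((hgm.comp hT).ennreal_toReal)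
  have hhm : Measurable h := (hgm.comp hT).inv.ennreal_toReal
  have hhnonneg : ∀ x, 0 ≤ h x := fun x => ENNReal.toReal_nonneg
  have hφpos : ∀ᵐ x ∂μ, 0 < φ x := by
    filter_upwards [hρ0, hgTμ] with x h1 h2
    exact mul_pos h1 (ENNReal.toReal_pos h2.1.ne' h2.2.ne)
  have hφofReal : (fun x => ENNReal.ofReal (φ x)) =ᵐ[μ] fun x => ρe x * g (T x) := by
    filter_upwards [hρ0', hgTμ] with x h1 h2
    rw [hφdef, hρedef]
    simp only
    rw [ENNReal.ofReal_mul h1, ENNReal.ofReal_toReal h2.2.ne]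
  have hφint : Integrable φ μ := by
    refine ⟨hφm.aestronglyMeasurable, ?_⟩
    rw [HasFiniteIntegral]
    have : (fun x => ‖φ x‖ₑ) =ᵐ[μ] fun x => ρe x * g (T x) := by
      filter_upwards [hφpos, hφofReal] with x h1 h2
      rw [Real.enorm_eq_ofReal h1.le, h2]
    rw [lintegral_congr_ae this, hE1]
    exact ENNReal.one_lt_top
  have hφ1 : ∫ x, φ x ∂μ = 1 := by
    rw [integral_eq_lintegral_of_nonneg_ae (hφpos.mono fun x hx => hx.le)
      hφm.aestronglyMeasurable, lintegral_congr_ae hφofReal, hE1, ENNReal.toReal_one]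
  have hhint : Integrable h μ := by
    refine ⟨hhm.aestronglyMeasurable, ?_⟩
    rw [HasFiniteIntegral]
    refine lt_of_le_of_lt (lintegral_mono fun x => ?_) (hE2 ▸ ENNReal.one_lt_top)
    rw [Real.enorm_eq_ofReal (hhnonneg x)]
    exact ENNReal.ofReal_toReal_le
  -- identification of the conditional expectation
  have hcond : (μ[ρ | MeasurableSpace.comap T m]) =ᵐ[μ] h := by
    haveI : SigmaFinite (μ.trim hT.comap_le) := inferInstance
    refine (ae_eq_condExp_of_forall_setIntegral_eq hT.comap_le hρint
      (fun s _ _ => hhint.integrableOn) ?_ ?_).symm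
    · rintro s ⟨A, hA, rfl⟩ -
      rw [hsetρ A hA]
      rw [integral_eq_lintegral_of_nonneg_ae (ae_restrict_of_ae (Eventually.of_forall hhnonneg))
        hhm.aestronglyMeasurable.restrict]
      congr 1
      have : (fun x => ENNReal.ofReal (h x)) =ᵐ[μ] fun x => (g (T x))⁻¹ := by
        filter_upwards [hgTμ] with x ⟨h0, _⟩
        rw [hhdef]
        simp only
        exact ENNReal.ofReal_toReal (by simpa using h0.ne')
      rw [lintegral_congr_ae (ae_restrict_of_ae this), hE3 A hA]
    · exact StronglyMeasurable.aestronglyMeasurable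
        ((hgm.inv.ennreal_toReal.comp (comap_measurable T)).stronglyMeasurable)
  -- RHS ↔ φ = 1 a.e.
  have hRHSiff : ((μ[ρ | MeasurableSpace.comap T m]) =ᵐ[μ] ρ) ↔ (φ =ᵐ[μ] fun _ => 1) := by
    constructor
    · intro he
      have hhρ : h =ᵐ[μ] ρ := hcond.symm.trans he
      filter_upwards [hhρ, hgTμ] with x hx ⟨h0, ht⟩
      have hGpos : 0 < (g (T x)).toReal := ENNReal.toReal_pos h0.ne' ht.ne
      rw [hφdef]
      simp only
      rw [← hx, hhdef]
      simp only
      rw [ENNReal.toReal_inv]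
      exact inv_mul_cancel₀ hGpos.ne'
    · intro hφ1ae
      refine hcond.trans ?_
      filter_upwards [hφ1ae, hgTμ] with x hx ⟨h0, ht⟩
      have hGpos : 0 < (g (T x)).toReal := ENNReal.toReal_pos h0.ne' ht.ne
      rw [hhdef]
      simp only
      rw [ENNReal.toReal_inv]
      rw [hφdef] at hx
      simp only at hx
      field_simp at hx ⊢
      linarith [hx]
  -- entropy bridge
  set I : Ω → ℝ := fun x => (g x).toReal * Real.log (g x).toReal with hIdef
  set ψ : Ω → ℝ := fun x => Real.log ((g (T x)).toReal) with hψdef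
  have hψm : Measurable ψ := Real.measurable_log.comp (hgm.comp hT).ennreal_toReal
  have hlogGm : Measurable fun y => Real.log ((g y).toReal) :=
    Real.measurable_log.comp hgm.ennreal_toReal
  have hIψint : Integrable I μ ↔ Integrable ψ μ := by
    have h1 : Integrable I μ ↔ Integrable (fun y => Real.log ((g y).toReal)) ν :=
      integrable_rnDeriv_smul_iff hac (f := fun y => Real.log ((g y).toReal))
    have h2 : Integrable (fun y => Real.log ((g y).toReal)) ν ↔ Integrable ψ μ := by
      rw [hνdef]
      exact integrable_map_measure (hlogGm.aestronglyMeasurable) hTae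
    rw [h1, h2]
  have hIψeq : ∫ x, I x ∂μ = ∫ x, ψ x ∂μ := by
    have h1 : ∫ x, I x ∂μ = ∫ y, Real.log ((g y).toReal) ∂ν :=
      integral_rnDeriv_smul hac (f := fun y => Real.log ((g y).toReal))
    have h2 : ∫ y, Real.log ((g y).toReal) ∂ν = ∫ x, ψ x ∂μ := by
      rw [hνdef]
      exact integral_map hTae hlogGm.aestronglyMeasurable
    rw [h1, h2]
  have hRE : relEntropy ν μ = if (ν ≪ μ ∧ Integrable I μ)
      then ((∫ x, I x ∂μ : ℝ) : EReal) else ⊤ := rfl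
  -- main equivalence
  constructor
  · intro hH
    rw [hRHSiff]
    by_cases hI : Integrable I μ
    swap
    · exfalso
      rw [hRE, if_neg (fun hand => hI hand.2)] at hH
      exact EReal.top_ne_coe _ hH
    rw [hRE, if_pos ⟨hac, hI⟩] at hH
    have hIval : ∫ x, I x ∂μ = -∫ x, Real.log (ρ x) ∂μ := by exact_mod_cast hH
    have hψint : Integrable ψ μ := hIψint.mp hI
    have hψval : ∫ x, ψ x ∂μ = -∫ x, Real.log (ρ x) ∂μ := by rw [← hIψeq]; exact hIval
    set lφ : Ω → ℝ := fun x => Real.log (ρ x) + ψ x with hlφdef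
    have hlφint : Integrable lφ μ := hlogρ.add hψint
    have hlφ0 : ∫ x, lφ x ∂μ = 0 := by
      rw [hlφdef]
      simp only
      rw [integral_add hlogρ hψint, hψval]
      ring
    have hlφeq : ∀ᵐ x ∂μ, lφ x = Real.log (φ x) := by
      filter_upwards [hρ0, hgTμ] with x h1 ⟨h0, ht⟩
      have hGpos : 0 < (g (T x)).toReal := ENNReal.toReal_pos h0.ne' ht.ne
      rw [hlφdef, hφdef, hψdef]
      simp only
      rw [Real.log_mul h1.ne' hGpos.ne']
    set k : Ω → ℝ := fun x => φ x - 1 - lφ x with hkdef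
    have hkint : Integrable k μ := (hφint.sub (integrable_const 1)).sub hlφint
    have hk0 : 0 ≤ᵐ[μ] k := by
      filter_upwards [hφpos, hlφeq] with x h1 h2
      have := Real.log_le_sub_one_of_pos h1
      simp only [Pi.zero_apply, hkdef]
      rw [h2]
      linarith
    have hkI : ∫ x, k x ∂μ = 0 := by
      have h1 : (∫ x, k x ∂μ) = (∫ x, φ x - 1 ∂μ) - ∫ x, lφ x ∂μ :=
        integral_sub (hφint.sub (integrable_const 1)) hlφint
      have h2 : (∫ x, φ x - 1 ∂μ) = (∫ x, φ x ∂μ) - ∫ _x, (1:ℝ) ∂μ :=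
        integral_sub hφint (integrable_const 1)
      rw [hφ1, integral_const, measureReal_def, measure_univ, ENNReal.toReal_one, one_smul] at h2
      rw [h1, h2, hlφ0]
      ring
    have hk_ae := (integral_eq_zero_iff_of_nonneg_ae hk0 hkint).mp hkI
    filter_upwards [hk_ae, hφpos, hlφeq] with x hkx hφx hlx
    by_contra hne
    have hlt := Real.log_lt_sub_one_of_pos hφx hne
    rw [← hlx] at hlt
    have : k x = 0 := hkx
    rw [hkdef] at this
    simp only at this
    linarith
  · intro he
    have hφ1ae : φ =ᵐ[μ] fun _ => 1 := hRHSiff.mp he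
    have hψρ : ψ =ᵐ[μ] fun x => -Real.log (ρ x) := by
      filter_upwards [hφ1ae, hρ0, hgTμ] with x hx h1 ⟨h0, ht⟩
      have hGpos : 0 < (g (T x)).toReal := ENNReal.toReal_pos h0.ne' ht.ne
      rw [hφdef] at hx
      simp only at hx
      have hG : (g (T x)).toReal = (ρ x)⁻¹ := by
        field_simp at hx ⊢
        linarith
      rw [hψdef]
      simp only
      rw [hG, Real.log_inv]
    have hψint : Integrable ψ μ := hlogρ.neg.congr hψρ.symm
    have hψval : ∫ x, ψ x ∂μ = -∫ x, Real.log (ρ x) ∂μ := by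
      rw [integral_congr_ae hψρ, integral_neg]
    have hI : Integrable I μ := hIψint.mpr hψint
    rw [hRE, if_pos ⟨hac, hI⟩, hIψeq, hψval]
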